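/- Let ε ∈ [0,1) and write ε̄ = 1 − ε. Then the maximum of the function δ ↦ H₂(δ) / (1/(1−ε) + ε̄ + δ) over the interval [0,1] equals its maximum over the subinterval [1/3, 1/2]; i.e., max over {δ ∈ [0,1]} of H₂(δ)/(1/(1−ε)+ε̄+δ) = max over {δ ∈ [1/3, 1/2]} of H₂(δ)/(1/(1−ε)+ε̄+δ). -/

import Mathlib

/-- The binary entropy function (base 2), with `H2 0 = H2 1 = 0`. -/
noncomputable def H2 (x : ℝ) : ℝ := -(x * Real.logb 2 x) - (1 - x) * Real.logb 2 (1 - x)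

lemma H2_eq (x : ℝ) : H2 x = Real.binEntropy x / Real.log 2 := by
  simp only [H2, Real.binEntropy, Real.logb, Real.log_inv]
  ring

lemma H2_symm (x : ℝ) : H2 (1 - x) = H2 x := by
  rw [H2_eq, H2_eq, Real.binEntropy_one_sub]

lemma H2_nonneg {x : ℝ} (h0 : 0 ≤ x) (h1 : x ≤ 1) : 0 ≤ H2 x := by
  rw [H2_eq]
  exact div_nonneg (Real.binEntropy_nonneg h0 h1) (Real.log_nonneg one_le_two)

/-- Let `ε ∈ [0,1)` and `ε̄ = 1−ε`.  The maximum of `δ ↦ H₂(δ)/(1/(1−ε) + ε̄ + δ)` over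
`[0,1]` equals its maximum over the subinterval `[1/3, 1/2]`. -/
theorem max_on_unit_interval_eq_max_on_third_half
    (ε : ℝ) (hε : ε ∈ Set.Ico (0 : ℝ) 1) :
    ∃ M : ℝ,
      IsGreatest
        ((fun δ : ℝ => H2 δ / (1 / (1 - ε) + (1 - ε) + δ)) '' Set.Icc 0 1) M ∧
      IsGreatest
        ((fun δ : ℝ => H2 δ / (1 / (1 - ε) + (1 - ε) + δ)) '' Set.Icc (1 / 3) (1 / 2)) M := by
  obtain ⟨hε0, hε1⟩ := hε
  have ht : (0:ℝ) < 1 - ε := by linarith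
  set c : ℝ := 1 / (1 - ε) + (1 - ε) with hc
  have hc2 : (2:ℝ) ≤ c := by
    have h1 : 2 - (1 - ε) ≤ 1 / (1 - ε) := by
      rw [le_div_iff₀ ht]; nlinarith [sq_nonneg ε]
    rw [hc]; linarith
  set f : ℝ → ℝ := fun δ => H2 δ / (c + δ) with hf
  have hlog2 : (0:ℝ) < Real.log 2 := Real.log_pos one_lt_two
  -- continuity of f on nonneg reals
  have hcont : ∀ s : Set ℝ, s ⊆ Set.Ici 0 → ContinuousOn f s := by
    intro s hs
    apply ContinuousOn.div
    · exact ((Real.binEntropy_continuous.div_const _).congr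
        (fun x => (H2_eq x).symm)).continuousOn
    · fun_prop
    · intro x hx
      have : (0:ℝ) ≤ x := hs hx
      positivity
  -- the maximum on [1/3, 1/2]
  have hcompact : IsCompact (f '' Set.Icc (1/3 : ℝ) (1/2)) :=
    isCompact_Icc.image_of_continuousOn (hcont _ (fun x hx => le_trans (by norm_num) hx.1))
  obtain ⟨M, hM⟩ := hcompact.exists_isGreatest
    ⟨f (1/3), Set.mem_image_of_mem f (by norm_num)⟩
  refine ⟨M, ⟨?_, ?_⟩, hM⟩
  · exact Set.image_mono (f := f) (Set.Icc_subset_Icc (by norm_num) (by norm_num)) hM.1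
  -- upper bound on [0,1]
  rintro y ⟨δ, hδ, rfl⟩
  -- monotonicity on [0, 1/3]
  have hmono : StrictMonoOn f (Set.Icc (0:ℝ) (1/3)) := by
    apply strictMonoOn_of_deriv_pos (convex_Icc _ _)
      (hcont _ (fun x hx => hx.1))
    intro x hx
    rw [interior_Icc] at hx
    obtain ⟨hx0, hx13⟩ := hx
    have hx1 : x < 1 := by linarith
    have hden : (0:ℝ) < c + x := by linarith
    have hD : HasDerivAt f
        (((Real.log (1 - x) - Real.log x) / Real.log 2 * (c + x)
          - H2 x * 1) / (c + x) ^ 2) x := by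
      have h1 : HasDerivAt (fun δ : ℝ => H2 δ)
          ((Real.log (1 - x) - Real.log x) / Real.log 2) x := by
        have := (Real.hasDerivAt_binEntropy (ne_of_gt hx0) (ne_of_lt hx1)).div_const
          (Real.log 2)
        exact this.congr_of_eventuallyEq (Filter.Eventually.of_forall fun y => H2_eq y)
      have h2 : HasDerivAt (fun δ : ℝ => c + δ) 1 x := (hasDerivAt_id x).const_add c
      exact h1.div h2 (ne_of_gt hden)
    rw [hD.deriv, H2_eq]
    apply div_pos _ (by positivity)
    have hA : Real.log 2 ≤ Real.log (1 - x) - Real.log x := by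
      have h2x : Real.log (2 * x) ≤ Real.log (1 - x) :=
        Real.log_le_log (by linarith) (by linarith)
      rw [Real.log_mul two_ne_zero (ne_of_gt hx0)] at h2x
      linarith
    have hB : Real.binEntropy x ≤ Real.log 2 := Real.binEntropy_le_log_two
    rw [div_mul_eq_mul_div, mul_one, div_sub_div_same]
    apply div_pos _ hlog2
    nlinarith [mul_le_mul hA (le_refl (c + x)) (by linarith) (by linarith)]
  -- bound on [0, 1/2]
  have hhalf : ∀ x ∈ Set.Icc (0:ℝ) (1/2), f x ≤ M := by
    intro x hx
    rcases le_or_gt (1/3 : ℝ) x with h | h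
    · exact hM.2 (Set.mem_image_of_mem f ⟨h, hx.2⟩)
    · have h13 : f x ≤ f (1/3) :=
        (hmono.monotoneOn ⟨hx.1, h.le⟩ (by norm_num) h.le)
      exact h13.trans (hM.2 (Set.mem_image_of_mem f (by norm_num)))
  rcases le_or_gt δ (1/2 : ℝ) with h | h
  · exact hhalf δ ⟨hδ.1, h⟩
  · have h1δ : (1 - δ) ∈ Set.Icc (0:ℝ) (1/2) := ⟨by linarith [hδ.2], by linarith⟩
    have hle : f δ ≤ f (1 - δ) := by
      rw [hf]
      simp only
      rw [← H2_symm δ]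
      exact div_le_div_of_nonneg_left (H2_nonneg (by linarith [hδ.2]) (by linarith))
        (by linarith [hδ.2]) (by linarith)
    exact hle.trans (hhalf _ h1δ)
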